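/- The involution P(z) defined as the unique formal power series with P(z) = -z + O(z^2) satisfying y(q)(1-y(q))^\tau = y(\bar q)(1-y(\bar q))^\tau, where y(q) = 1/(\tau+1) - z and y(\bar q) = 1/(\tau+1) - P(z), has expansion P(z) = -z - (2(\tau^2-1)/(3\tau)) z^2 - (4(\tau^2-1)^2/(9\tau^2)) z^3 + O(z^4), and satisfies P(P(z)) = z. -/

import Mathlib

open PowerSeries

noncomputable section

/-- `(1+u)^τ := ∑_n binom(τ,n) u^n`, the formal binomial power. -/
def binomPow {K : Type*} [Field K] (τ : K) (u : PowerSeries K) : PowerSeries K :=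
  PowerSeries.mk fun m => ∑ n ∈ Finset.range (m + 1),
    ((∏ a ∈ Finset.range n, (τ - (a : K))) / (Nat.factorial n : K)) *
      PowerSeries.coeff m (u ^ n)

/-- Substitution `f(p(z))` of a power series `p` with zero constant term into `f`. -/
def seriesComp {K : Type*} [Field K] (f p : PowerSeries K) : PowerSeries K :=
  PowerSeries.mk fun m => ∑ n ∈ Finset.range (m + 1),
    PowerSeries.coeff n f * PowerSeries.coeff m (p ^ n)

/-- `g(z) = (1/(τ+1) - z)·(1 + ((τ+1)/τ) z)^τ`; the functional equation
`y(q)(1-y(q))^τ = y(q̄)(1-y(q̄))^τ` for `y(q) = 1/(τ+1) - z`, `y(q̄) = 1/(τ+1) - P(z)`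
is (after cancelling the constant factor `(τ/(τ+1))^τ`) exactly `g(P(z)) = g(z)`. -/
def lambertLocal {K : Type*} [Field K] (τ : K) : PowerSeries K :=
  (PowerSeries.C ((τ + 1)⁻¹) - PowerSeries.X) *
    binomPow τ (PowerSeries.C ((τ + 1) / τ) * PowerSeries.X)

section Aux

set_option linter.unusedSectionVars false

variable {K : Type*} [Field K]

lemma aux_coeff_pow_mul_pow {u v : PowerSeries K} (hu : constantCoeff u = 0)
    (hv : constantCoeff v = 0) {m i j : ℕ} (h : m < i + j) :
    coeff m (u ^ i * v ^ j) = 0 := by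
  have hXu : (X : PowerSeries K) ∣ u := X_dvd_iff.mpr hu
  have hXv : (X : PowerSeries K) ∣ v := X_dvd_iff.mpr hv
  have : (X : PowerSeries K) ^ (i + j) ∣ u ^ i * v ^ j := by
    rw [pow_add]; exact mul_dvd_mul (pow_dvd_pow_of_dvd hXu i) (pow_dvd_pow_of_dvd hXv j)
  exact X_pow_dvd_iff.mp this m h

lemma aux_coeff_pow {p : PowerSeries K} (hp : constantCoeff p = 0) {m n : ℕ}
    (h : m < n) : coeff m (p ^ n) = 0 := by
  have := aux_coeff_pow_mul_pow (v := (X : PowerSeries K)) hp (by simp) (j := 0) (i := n)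
    (m := m) (by simpa)
  simpa using this

lemma seriesComp_coeff (f p : PowerSeries K) (m : ℕ) :
    coeff m (seriesComp f p) = ∑ n ∈ Finset.range (m + 1),
      coeff n f * coeff m (p ^ n) := coeff_mk _ _

lemma seriesComp_coeff' (f p : PowerSeries K) (hp : constantCoeff p = 0) {m N : ℕ}
    (hN : m < N) : coeff m (seriesComp f p) = ∑ n ∈ Finset.range N,
      coeff n f * coeff m (p ^ n) := by
  rw [seriesComp_coeff]
  refine Finset.sum_subset (Finset.range_subset_range.mpr hN) ?_
  intro n hn hnm
  rw [aux_coeff_pow hp (by simp at hnm ⊢; omega), mul_zero]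

lemma seriesComp_constantCoeff (f p : PowerSeries K) :
    constantCoeff (seriesComp f p) = constantCoeff f := by
  have := seriesComp_coeff f p 0
  simpa using this

lemma seriesComp_one (p : PowerSeries K) : seriesComp 1 p = 1 := by
  ext m
  rw [seriesComp_coeff]
  rcases Nat.eq_zero_or_pos m with rfl | hm
  · simp
  · rw [Finset.sum_eq_zero, coeff_one, if_neg (by omega)]
    intro n hn
    rcases Nat.eq_zero_or_pos n with rfl | hn0
    · rw [pow_zero, coeff_one (n := m), if_neg (by omega), mul_zero]
    · rw [coeff_one, if_neg (by omega), zero_mul]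

lemma eval₂_coeff {p : PowerSeries K} (hp : constantCoeff p = 0)
    (Q : Polynomial K) (m : ℕ) :
    coeff m (Polynomial.eval₂ (C) p Q) = ∑ n ∈ Finset.range (m + 1),
      Q.coeff n * coeff m (p ^ n) := by
  set N := max (Q.natDegree + 1) (m + 1) with hN
  rw [Polynomial.eval₂_eq_sum_range' (C) (n := N) (by omega) p]
  rw [map_sum]
  rw [show (∑ i ∈ Finset.range N, coeff m (C (Q.coeff i) * p ^ i)) =
      ∑ i ∈ Finset.range N, Q.coeff i * coeff m (p ^ i) by
    refine Finset.sum_congr rfl fun i _ => ?_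
    rw [coeff_C_mul]]
  symm
  refine Finset.sum_subset (Finset.range_subset_range.mpr (by omega)) ?_
  intro n hn hnm
  rw [aux_coeff_pow hp (by simp at hnm; omega), mul_zero]

lemma seriesComp_eq_eval₂ (f : PowerSeries K) {p : PowerSeries K}
    (hp : constantCoeff p = 0) (m : ℕ) :
    coeff m (seriesComp f p) = coeff m (Polynomial.eval₂ (C) p (trunc (m+1) f)) := by
  rw [eval₂_coeff hp, seriesComp_coeff]
  refine Finset.sum_congr rfl fun n hn => ?_
  rw [coeff_trunc, if_pos (by simpa using hn)]

lemma coeff_mul_congr {A A' B B' : PowerSeries K} (m : ℕ)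
    (hA : ∀ i ≤ m, coeff i A = coeff i A')
    (hB : ∀ i ≤ m, coeff i B = coeff i B') :
    coeff m (A * B) = coeff m (A' * B') := by
  rw [coeff_mul, coeff_mul]
  refine Finset.sum_congr rfl fun x hx => ?_
  rw [Finset.HasAntidiagonal.mem_antidiagonal] at hx
  rw [hA x.1 (by omega), hB x.2 (by omega)]

lemma seriesComp_mul (f g : PowerSeries K) {p : PowerSeries K}
    (hp : constantCoeff p = 0) :
    seriesComp (f * g) p = seriesComp f p * seriesComp g p := by
  ext m
  rw [seriesComp_eq_eval₂ _ hp]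
  have step : coeff m (seriesComp f p * seriesComp g p) =
      coeff m (Polynomial.eval₂ (C) p (trunc (m+1) f) *
        Polynomial.eval₂ (C) p (trunc (m+1) g)) := by
    refine coeff_mul_congr m (fun i hi => ?_) (fun i hi => ?_) <;>
    · rw [seriesComp_eq_eval₂ _ hp, eval₂_coeff hp, eval₂_coeff hp]
      refine Finset.sum_congr rfl fun n hn => ?_
      simp only [coeff_trunc]
      rw [if_pos (by simp at hn ⊢; omega), if_pos (by simp at hn; omega)]
  rw [step, ← Polynomial.eval₂_mul, eval₂_coeff hp, eval₂_coeff hp]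
  refine Finset.sum_congr rfl fun n hn => ?_
  congr 1
  simp only [Finset.mem_range] at hn
  rw [coeff_trunc, if_pos (by omega), Polynomial.coeff_mul, PowerSeries.coeff_mul]
  refine Finset.sum_congr rfl fun x hx => ?_
  rw [Finset.HasAntidiagonal.mem_antidiagonal] at hx
  simp only [coeff_trunc]
  rw [if_pos (by omega), if_pos (by omega)]

lemma seriesComp_pow (p : PowerSeries K) {q : PowerSeries K}
    (hq : constantCoeff q = 0) (n : ℕ) :
    seriesComp (p ^ n) q = (seriesComp p q) ^ n := by
  induction n with
  | zero => simpa using seriesComp_one q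
  | succ n ih => rw [pow_succ, seriesComp_mul _ _ hq, ih, pow_succ]

lemma seriesComp_assoc (f p q : PowerSeries K) (hp : constantCoeff p = 0)
    (hq : constantCoeff q = 0) :
    seriesComp (seriesComp f p) q = seriesComp f (seriesComp p q) := by
  ext m
  rw [seriesComp_coeff f (seriesComp p q) m]
  symm
  have : ∀ n, coeff m ((seriesComp p q) ^ n) = coeff m (seriesComp (p ^ n) q) := by
    intro n; rw [seriesComp_pow p hq]
  calc ∑ n ∈ Finset.range (m + 1), coeff n f * coeff m ((seriesComp p q) ^ n)
      = ∑ n ∈ Finset.range (m + 1), coeff n f *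
          ∑ k ∈ Finset.range (m + 1), coeff k (p ^ n) * coeff m (q ^ k) := by
        refine Finset.sum_congr rfl fun n _ => ?_
        rw [this n, seriesComp_coeff]
    _ = ∑ k ∈ Finset.range (m + 1),
          (∑ n ∈ Finset.range (m + 1), coeff n f * coeff k (p ^ n)) *
            coeff m (q ^ k) := by
        simp only [Finset.mul_sum, Finset.sum_mul, mul_assoc]
        rw [Finset.sum_comm]
    _ = ∑ k ∈ Finset.range (m + 1), coeff k (seriesComp f p) * coeff m (q ^ k) := by
        refine Finset.sum_congr rfl fun k hk => ?_
        rw [seriesComp_coeff' f p hp (N := m + 1) (by simp at hk; omega)]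
    _ = coeff m (seriesComp (seriesComp f p) q) := (seriesComp_coeff _ q m).symm

variable [CharZero K]

lemma comp_fixed_unique {g Q : PowerSeries K} (hg1 : coeff 1 g = 0)
    (hg2 : coeff 2 g ≠ 0) (hQ0 : constantCoeff Q = 0)
    (hQ1 : coeff 1 Q = 1) (h : seriesComp g Q = g) : Q = X := by
  ext n
  induction n using Nat.strong_induction_on with
  | _ n IH =>
  match n, IH with
  | 0, _ => simpa using hQ0
  | 1, _ => simpa using hQ1
  | (d+2), IH =>
    set n := d + 2 with hn
    have hD : ∀ j < n, coeff j (Q - X) = 0 := by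
      intro j hj
      rw [map_sub, IH j hj, sub_self]
    have hXcol : coeff (n+1) g = ∑ k ∈ Finset.range (n + 2),
        coeff k g * coeff (n+1) ((X : PowerSeries K) ^ k) := by
      rw [Finset.sum_eq_single (n+1)]
      · rw [coeff_X_pow, if_pos rfl, mul_one]
      · intro k _ hk
        rw [coeff_X_pow, if_neg (fun hh => hk hh.symm), mul_zero]
      · intro hk; exact absurd (by simp) hk
    have hcomp := congrArg (coeff (n+1)) h
    rw [seriesComp_coeff, hXcol] at hcomp
    have hdiff : ∑ k ∈ Finset.range (n + 2),
        coeff k g * coeff (n+1) (Q ^ k - (X : PowerSeries K) ^ k) = 0 := by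
      simp only [map_sub, mul_sub]
      rw [Finset.sum_sub_distrib, hcomp, sub_self]
    have hterm : ∀ k ∈ Finset.range (n + 2),
        coeff k g * coeff (n+1) (Q ^ k - (X : PowerSeries K) ^ k) =
        (if k = 2 then coeff 2 g * (2 * coeff n (Q - X)) else 0) := by
      intro k hk
      rw [← geom_sum₂_mul Q (X : PowerSeries K) k]
      rw [coeff_mul, Finset.Nat.sum_antidiagonal_eq_sum_range_succ_mk]
      rcases eq_or_ne k 2 with rfl | hk2
      · rw [if_pos rfl]
        rw [Finset.sum_eq_single 1]
        · have h1 : coeff 1 (∑ i ∈ Finset.range 2, Q ^ i * X ^ (2 - 1 - i)) = 2 := by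
            simp only [Finset.sum_range_succ, Finset.sum_range_zero, zero_add]
            norm_num [hQ1]
          rw [show n + 1 - 1 = n from rfl, h1]
        · intro a ha ha1
          rcases Nat.lt_or_ge a 2 with h2 | h2
          · have ha0 : a = 0 := by omega
            subst ha0
            rw [show (coeff 0) (∑ i ∈ Finset.range 2, Q ^ i * X ^ (2 - 1 - i)) = 0 from by
              simp [Finset.sum_range_succ, coeff_zero_eq_constantCoeff, hQ0], zero_mul]
          · rw [hD (n + 1 - a) (by omega), mul_zero]
        · intro hmem; exact absurd (by simp) hmem
      · rw [if_neg hk2]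
        rcases Nat.lt_or_ge k 2 with hklt | hkge
        · interval_cases k
          · simp
          · rw [show ∑ i ∈ Finset.range 1, Q ^ i * X ^ (1 - 1 - i) = 1 by simp]
            rw [hg1, zero_mul]
        · have hk3 : 3 ≤ k := by omega
          rw [Finset.sum_eq_zero, mul_zero]
          intro a ha
          rcases Nat.lt_or_ge a 2 with h2 | h2
          · have : coeff a (∑ i ∈ Finset.range k, Q ^ i * X ^ (k - 1 - i)) = 0 := by
              rw [map_sum, Finset.sum_eq_zero]
              intro i hi
              simp only [Finset.mem_range] at hi
              exact aux_coeff_pow_mul_pow hQ0 (by simp) (by omega)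
            rw [this, zero_mul]
          · rw [hD (n + 1 - a) (by omega), mul_zero]
    rw [Finset.sum_congr rfl hterm] at hdiff
    rw [Finset.sum_ite_eq' (Finset.range (n+2)) 2] at hdiff
    rw [if_pos (by simp; omega)] at hdiff
    have h2 : coeff n (Q - X) = 0 := by
      rcases mul_eq_zero.mp hdiff with hh | hh
      · exact absurd hh hg2
      · rcases mul_eq_zero.mp hh with hh2 | hh2
        · exact absurd hh2 two_ne_zero
        · exact hh2
    rw [map_sub, sub_eq_zero] at h2
    exact h2

lemma coeff_binomPow (τ a : K) (m : ℕ) :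
    coeff m (binomPow τ (C a * X)) =
      (∏ i ∈ Finset.range m, (τ - (i : K))) / (Nat.factorial m : K) * a ^ m := by
  rw [binomPow, coeff_mk]
  rw [Finset.sum_eq_single m]
  · rw [mul_pow, ← map_pow, coeff_C_mul, coeff_X_pow, if_pos rfl, mul_one, mul_comm]
  · intro n _ hnm
    rw [mul_pow, ← map_pow, coeff_C_mul, coeff_X_pow, if_neg (fun h => hnm h.symm),
      mul_zero, mul_zero]
  · intro h; exact absurd (by simp) h

lemma coeff_lambert_succ (τ : K) (k : ℕ) :
    coeff (k+1) (lambertLocal τ) =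
      (τ+1)⁻¹ * ((∏ i ∈ Finset.range (k+1), (τ - (i : K))) / (Nat.factorial (k+1) : K)
        * ((τ+1)/τ)^(k+1))
      - (∏ i ∈ Finset.range k, (τ - (i : K))) / (Nat.factorial k : K) * ((τ+1)/τ)^k := by
  rw [lambertLocal, sub_mul, map_sub, coeff_succ_X_mul, coeff_C_mul,
    coeff_binomPow, coeff_binomPow]

lemma lambert_c1 (τ : K) (hτ0 : τ ≠ 0) (hτ1 : τ + 1 ≠ 0) :
    coeff 1 (lambertLocal τ) = 0 := by
  rw [show (1:ℕ) = 0 + 1 from rfl, coeff_lambert_succ]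
  simp [Finset.prod_range_succ, Nat.factorial]
  field_simp
  simp

lemma lambert_c2 (τ : K) (hτ0 : τ ≠ 0) (hτ1 : τ + 1 ≠ 0) :
    coeff 2 (lambertLocal τ) = -(τ+1)^2/(2*τ) := by
  rw [show (2:ℕ) = 1 + 1 from rfl, coeff_lambert_succ]
  norm_num [Finset.prod_range_succ, Nat.factorial]
  field_simp
  ring

lemma lambert_c3 (τ : K) (hτ0 : τ ≠ 0) (hτ1 : τ + 1 ≠ 0) :
    coeff 3 (lambertLocal τ) = -((τ-1)*(τ+1)^3)/(3*τ^2) := by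
  rw [show (3:ℕ) = 2 + 1 from rfl, coeff_lambert_succ]
  norm_num [Finset.prod_range_succ, Nat.factorial]
  field_simp
  ring

lemma lambert_c4 (τ : K) (hτ0 : τ ≠ 0) (hτ1 : τ + 1 ≠ 0) :
    coeff 4 (lambertLocal τ) = -((τ-1)*(τ-2)*(τ+1)^4)/(8*τ^3) := by
  rw [show (4:ℕ) = 3 + 1 from rfl, coeff_lambert_succ]
  norm_num [Finset.prod_range_succ, Nat.factorial]
  field_simp
  ring

end Aux

/-- The deck-transformation series `P(z) = -z + O(z²)` satisfying
`y(q)(1-y(q))^τ = y(q̄)(1-y(q̄))^τ` (with `y(q) = 1/(τ+1) - z`, `y(q̄) = 1/(τ+1) - P(z)`)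
has expansion `P(z) = -z - (2(τ²-1)/(3τ)) z² - (4(τ²-1)²/(9τ²)) z³ + O(z⁴)` and is an
involution: `P(P(z)) = z`. -/
theorem deck_involution {K : Type*} [Field K] [CharZero K]
    (τ : K) (hτ0 : τ ≠ 0) (hτ1 : τ + 1 ≠ 0)
    (P : PowerSeries K)
    (h0 : PowerSeries.constantCoeff P = 0)
    (h1 : PowerSeries.coeff 1 P = -1)
    (heq : seriesComp (lambertLocal τ) P = lambertLocal τ) :
    PowerSeries.coeff 2 P = -(2 * (τ ^ 2 - 1)) / (3 * τ) ∧
    PowerSeries.coeff 3 P = -(4 * (τ ^ 2 - 1) ^ 2) / (9 * τ ^ 2) ∧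
    seriesComp P P = PowerSeries.X := by
  have hc0 : coeff 0 P = 0 := by rw [coeff_zero_eq_constantCoeff]; exact h0
  have hg1 := lambert_c1 τ hτ0 hτ1
  have hg2 := lambert_c2 τ hτ0 hτ1
  have hg3 := lambert_c3 τ hτ0 hτ1
  have hg4 := lambert_c4 τ hτ0 hτ1
  -- coefficients of powers of P
  have e20 : coeff 0 (P^2) = 0 := by
    rw [pow_two, coeff_mul, Finset.Nat.sum_antidiagonal_eq_sum_range_succ_mk]
    simp [Finset.sum_range_succ, hc0]
  have e21 : coeff 1 (P^2) = 0 := by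
    rw [pow_two, coeff_mul, Finset.Nat.sum_antidiagonal_eq_sum_range_succ_mk]
    simp [Finset.sum_range_succ, hc0]
  have e22 : coeff 2 (P^2) = 1 := by
    rw [pow_two, coeff_mul, Finset.Nat.sum_antidiagonal_eq_sum_range_succ_mk]
    simp [Finset.sum_range_succ, hc0, h1]
  have e23 : coeff 3 (P^2) = -2 * coeff 2 P := by
    rw [pow_two, coeff_mul, Finset.Nat.sum_antidiagonal_eq_sum_range_succ_mk]
    simp [Finset.sum_range_succ, hc0, h1]
    ring
  have e24 : coeff 4 (P^2) = (coeff 2 P)^2 - 2 * coeff 3 P := by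
    rw [pow_two, coeff_mul, Finset.Nat.sum_antidiagonal_eq_sum_range_succ_mk]
    simp [Finset.sum_range_succ, hc0, h1]
    ring
  have e30 : coeff 0 (P^3) = 0 := by
    rw [pow_succ, coeff_mul, Finset.Nat.sum_antidiagonal_eq_sum_range_succ_mk]
    simp [Finset.sum_range_succ, hc0, e20]
  have e31 : coeff 1 (P^3) = 0 := by
    rw [pow_succ, coeff_mul, Finset.Nat.sum_antidiagonal_eq_sum_range_succ_mk]
    simp [Finset.sum_range_succ, hc0, h1, e20, e21]
  have e32 : coeff 2 (P^3) = 0 := by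
    rw [pow_succ, coeff_mul, Finset.Nat.sum_antidiagonal_eq_sum_range_succ_mk]
    simp [Finset.sum_range_succ, hc0, h1, e20, e21, e22]
  have e33 : coeff 3 (P^3) = -1 := by
    rw [pow_succ, coeff_mul, Finset.Nat.sum_antidiagonal_eq_sum_range_succ_mk]
    simp [Finset.sum_range_succ, hc0, h1, e20, e21, e22, e23]
  have e34 : coeff 4 (P^3) = 3 * coeff 2 P := by
    rw [pow_succ, coeff_mul, Finset.Nat.sum_antidiagonal_eq_sum_range_succ_mk]
    simp [Finset.sum_range_succ, hc0, h1, e20, e21, e22, e23, e24]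
    ring
  have e44 : coeff 4 (P^4) = 1 := by
    rw [pow_succ, coeff_mul, Finset.Nat.sum_antidiagonal_eq_sum_range_succ_mk]
    simp [Finset.sum_range_succ, hc0, h1, e30, e31, e32, e33, e34]
  -- the order-3 coefficient equation
  have hq3 := congrArg (coeff 3) heq
  rw [seriesComp_coeff] at hq3
  simp only [Finset.sum_range_succ, Finset.sum_range_zero, pow_zero, pow_one,
    coeff_one, e23, e33, hg1, hg2, hg3] at hq3
  norm_num at hq3
  field_simp at hq3
  have hp2 : coeff 2 P = -(2 * (τ ^ 2 - 1)) / (3 * τ) := by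
    rw [eq_div_iff (mul_ne_zero three_ne_zero hτ0)]
    refine mul_left_cancel₀ (a := 6*τ^3*(τ+1)^2)
      (by norm_num [hτ0, hτ1, mul_eq_zero, pow_eq_zero_iff]) ?_
    linear_combination (6*τ^3*(τ+1)^2) * hq3
  -- the order-4 coefficient equation
  have hq4 := congrArg (coeff 4) heq
  rw [seriesComp_coeff] at hq4
  simp only [Finset.sum_range_succ, Finset.sum_range_zero, pow_zero, pow_one,
    coeff_one, e24, e34, e44, hg1, hg2, hg3, hg4, hp2] at hq4
  norm_num at hq4
  field_simp at hq4
  have hp3 : coeff 3 P = -(4 * (τ ^ 2 - 1) ^ 2) / (9 * τ ^ 2) := by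
    rw [eq_div_iff (by norm_num [hτ0, mul_eq_zero, pow_eq_zero_iff] : (9:K)*τ^2 ≠ 0)]
    refine mul_left_cancel₀ (a := 18*τ^3*(τ+1)^2)
      (by norm_num [hτ0, hτ1, mul_eq_zero, pow_eq_zero_iff]) ?_
    linear_combination (18*τ^3) * hq4
  refine ⟨hp2, hp3, ?_⟩
  -- involution
  have hQ0 : constantCoeff (seriesComp P P) = 0 := by
    rw [seriesComp_constantCoeff]; exact h0
  have hQ1 : coeff 1 (seriesComp P P) = 1 := by
    rw [seriesComp_coeff]
    simp [Finset.sum_range_succ, hc0, h1]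
  have hfix : seriesComp (lambertLocal τ) (seriesComp P P) = lambertLocal τ := by
    rw [← seriesComp_assoc _ _ _ h0 h0, heq, heq]
  refine comp_fixed_unique hg1 ?_ hQ0 hQ1 hfix
  rw [hg2]
  intro hcon
  rw [div_eq_zero_iff] at hcon
  rcases hcon with hcon | hcon
  · exact hτ1 (pow_eq_zero_iff (by norm_num) |>.mp (neg_eq_zero.mp hcon))
  · rcases mul_eq_zero.mp hcon with hcon | hcon
    · exact two_ne_zero hcon
    · exact hτ0 hcon

end
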